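/- The infinite sum of 3^i/(i * binom(2i, i)) for i from 1 to infinity equals 2π/√3. -/

import Mathlib

lemma beta_nat (m n : ℕ) :
    ∫ x in (0:ℝ)..1, x ^ m * (1 - x) ^ n
      = (m.factorial : ℝ) * n.factorial / (m + n + 1).factorial := by
  have hs : 0 < Complex.re ((m:ℂ) + 1) := by simp; positivity
  have ht : 0 < Complex.re ((n:ℂ) + 1) := by simp; positivity
  have h := Complex.Gamma_mul_Gamma_eq_betaIntegral hs ht
  rw [Complex.Gamma_nat_eq_factorial m, Complex.Gamma_nat_eq_factorial n] at h
  have h2 : ((m:ℂ)+1) + ((n:ℂ)+1) = ((m+n+1 : ℕ) : ℂ) + 1 := by push_cast; ring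
  rw [h2, Complex.Gamma_nat_eq_factorial (m+n+1)] at h
  have hbeta : Complex.betaIntegral ((m:ℂ)+1) ((n:ℂ)+1)
      = ((∫ x in (0:ℝ)..1, x ^ m * (1 - x) ^ n : ℝ) : ℂ) := by
    rw [Complex.betaIntegral]
    have : ∀ x : ℝ, (x : ℂ) ^ ((m:ℂ) + 1 - 1) * (1 - (x : ℂ)) ^ ((n:ℂ) + 1 - 1)
        = ((x ^ m * (1 - x) ^ n : ℝ) : ℂ) := by
      intro x
      simp only [add_sub_cancel_right]
      rw [Complex.cpow_natCast, Complex.cpow_natCast]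
      push_cast
      ring
    rw [intervalIntegral.integral_congr (fun x _ => this x),
      intervalIntegral.integral_ofReal]
  rw [hbeta] at h
  have hfac : ((m+n+1).factorial : ℝ) ≠ 0 := by exact_mod_cast (m+n+1).factorial_ne_zero
  have h' : (m.factorial : ℝ) * n.factorial
      = (m + n + 1).factorial * ∫ x in (0:ℝ)..1, x ^ m * (1 - x) ^ n := by
    exact_mod_cast h
  field_simp
  linarith [h']

open Real MeasureTheory intervalIntegral Set

noncomputable def gfun (n : ℕ) (t : ℝ) : ℝ := 3^(n+1) * (t^n * (1-t)^(n+1))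

-- pointwise geometric sum
lemma hasSum_g {t : ℝ} (ht : t ∈ Set.Icc (0:ℝ) 1) :
    HasSum (fun n => gfun n t) (3*(1-t)/(3*t^2-3*t+1)) := by
  obtain ⟨h0, h1⟩ := ht
  have hr0 : 0 ≤ 3*t*(1-t) := by nlinarith
  have hr1 : 3*t*(1-t) < 1 := by nlinarith [sq_nonneg (t - 1/2)]
  have h := (hasSum_geometric_of_lt_one hr0 hr1).mul_left (3*(1-t))
  have heq : (fun n => 3*(1-t) * (3*t*(1-t))^n) = fun n => gfun n t := by
    funext n
    simp only [gfun, mul_pow]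
    ring
  rw [heq] at h
  have hq : 1 - 3*t*(1-t) = 3*t^2-3*t+1 := by ring
  rw [hq, ← div_eq_mul_inv] at h
  exact h

lemma q_pos (t : ℝ) : 0 < 3*t^2-3*t+1 := by nlinarith [sq_nonneg (t - 1/2)]

-- the elementary integral
lemma integral_closed_form :
    ∫ t in (0:ℝ)..1, 3*(1-t)/(3*t^2-3*t+1) = 2*π/Real.sqrt 3 := by
  have hderiv : ∀ t ∈ Set.uIcc (0:ℝ) 1, HasDerivAt
      (fun t : ℝ => -(1/2)*Real.log (3*t^2-3*t+1)
        + Real.sqrt 3 * Real.arctan (Real.sqrt 3 * (2*t-1)))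
      (3*(1-t)/(3*t^2-3*t+1)) t := by
    intro t _
    have hq := q_pos t
    have h1 : HasDerivAt (fun t : ℝ => 3*t^2-3*t+1) (6*t-3) t := by
      have h' := (((hasDerivAt_pow 2 t).const_mul (3:ℝ)).sub
        ((hasDerivAt_id t).const_mul 3)).add_const 1
      have h'' : HasDerivAt (fun x : ℝ => 3*x^2 - 3*id x + 1) (6*t-3) t :=
        h'.congr_deriv (by push_cast; ring)
      simpa [id] using h''
    have hlog := (h1.log hq.ne').const_mul (-(1/2) : ℝ)
    have h2 : HasDerivAt (fun t : ℝ => Real.sqrt 3 * (2*t-1)) (Real.sqrt 3 * 2) t := by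
      have := ((hasDerivAt_id t).const_mul (2:ℝ)).sub_const 1
      exact (this.const_mul (Real.sqrt 3)).congr_deriv (by ring)
    have harc := ((Real.hasDerivAt_arctan (Real.sqrt 3 * (2*t-1))).comp t h2).const_mul
      (Real.sqrt 3)
    have hsum := hlog.add harc
    refine hsum.congr_deriv ?_
    symm
    have h3 : Real.sqrt 3 ^ 2 = 3 := Real.sq_sqrt (by norm_num)
    have h4 : (1 + (Real.sqrt 3 * (2*t-1))^2) = 4*(3*t^2-3*t+1) := by
      rw [mul_pow, h3]; ring
    rw [h4]
    have h5 : Real.sqrt 3 * Real.sqrt 3 = 3 := Real.mul_self_sqrt (by norm_num)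
    field_simp
    ring_nf
    rw [h3]
    ring
  have hcont : IntervalIntegrable (fun t : ℝ => 3*(1-t)/(3*t^2-3*t+1)) volume 0 1 := by
    apply Continuous.intervalIntegrable
    exact (continuous_const.mul (continuous_const.sub continuous_id)).div
      (by continuity) (fun t => (q_pos t).ne')
  rw [intervalIntegral.integral_eq_sub_of_hasDerivAt hderiv hcont]
  have e1 : (3*(1:ℝ)^2-3*1+1) = 1 := by norm_num
  have e0 : (3*(0:ℝ)^2-3*0+1) = 1 := by norm_num
  have a1 : Real.sqrt 3 * (2*(1:ℝ)-1) = Real.sqrt 3 := by ring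
  have a0 : Real.sqrt 3 * (2*(0:ℝ)-1) = -Real.sqrt 3 := by ring
  have harct : Real.arctan (Real.sqrt 3) = π/3 := by
    rw [← Real.tan_pi_div_three]
    exact Real.arctan_tan (by linarith [Real.pi_pos]) (by linarith [Real.pi_pos])
  simp only [e1, e0, a1, a0, Real.log_one, Real.arctan_neg, harct]
  have h3 : Real.sqrt 3 * Real.sqrt 3 = 3 := Real.mul_self_sqrt (by norm_num)
  have hs3 : Real.sqrt 3 ≠ 0 := by positivity
  field_simp
  linear_combination 4*π*h3

-- term formula
lemma term_eq (n : ℕ) : (3:ℝ)^(n+1) / (((n:ℝ)+1) * ((Nat.choose (2*(n+1)) (n+1)) : ℝ))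
    = ∫ t in Set.Ioc (0:ℝ) 1, gfun n t := by
  have h1 : ∫ t in Set.Ioc (0:ℝ) 1, gfun n t = ∫ t in (0:ℝ)..1, gfun n t := by
    rw [intervalIntegral.integral_of_le (by norm_num)]
  rw [h1]
  simp only [gfun]
  rw [intervalIntegral.integral_const_mul, beta_nat n (n+1)]
  have hnat : (n+1) * Nat.choose (2*(n+1)) (n+1) * (n.factorial * (n+1).factorial)
      = (n + (n+1) + 1).factorial := by
    have h := Nat.choose_mul_factorial_mul_factorial (show n+1 ≤ 2*(n+1) by omega)
    have h2 : 2*(n+1) - (n+1) = n+1 := by omega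
    rw [h2] at h
    have h3 : n + (n+1) + 1 = 2*(n+1) := by omega
    rw [h3, ← h, Nat.factorial_succ]
    ring
  have hc : 0 < Nat.choose (2*(n+1)) (n+1) := Nat.choose_pos (by omega)
  have hne : ((n:ℝ)+1) * ((Nat.choose (2*(n+1)) (n+1)) : ℝ) ≠ 0 :=
    mul_ne_zero (by positivity) (Nat.cast_ne_zero.mpr hc.ne')
  have hfac : ((n + (n+1) + 1).factorial : ℝ) ≠ 0 := by
    exact_mod_cast (n + (n+1) + 1).factorial_ne_zero
  rw [div_eq_iff hne, eq_comm]
  have hcast : ((n:ℝ)+1) * ((Nat.choose (2*(n+1)) (n+1)) : ℝ)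
      * ((n.factorial : ℝ) * ((n+1).factorial : ℝ))
      = ((n + (n+1) + 1).factorial : ℝ) := by exact_mod_cast congrArg (Nat.cast (R := ℝ)) hnat
  field_simp
  linear_combination hcast

lemma g_nonneg {n : ℕ} {t : ℝ} (ht : t ∈ Set.Icc (0:ℝ) 1) : 0 ≤ gfun n t := by
  obtain ⟨h0, h1⟩ := ht
  have h2 : 0 ≤ 1 - t := by linarith
  simp only [gfun]
  positivity

lemma g_le {n : ℕ} {t : ℝ} (ht : t ∈ Set.Icc (0:ℝ) 1) : gfun n t ≤ 3 * (3/4)^n := by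
  obtain ⟨h0, h1⟩ := ht
  have h2 : 0 ≤ 1 - t := by linarith
  have key : t^n * (1-t)^(n+1) ≤ (1/4)^n := by
    calc t^n * (1-t)^(n+1) = (t*(1-t))^n * (1-t) := by rw [mul_pow]; ring
    _ ≤ (1/4)^n * 1 := by
        apply mul_le_mul _ (by linarith) h2 (by positivity)
        apply pow_le_pow_left₀ (by positivity) (by nlinarith [sq_nonneg (t-1/2)])
    _ = (1/4)^n := by ring
  calc gfun n t ≤ 3^(n+1) * (1/4)^n := by
        simp only [gfun]
        apply mul_le_mul_of_nonneg_left key (by positivity)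
    _ = 3 * (3/4)^n := by rw [pow_succ, div_pow, div_pow]; field_simp; ring

theorem stmt_2 : (∑' i : ℕ, (3:ℝ)^(i+1) / (((i:ℝ)+1) * ((Nat.choose (2*(i+1)) (i+1)) : ℝ))) = 2 * Real.pi / Real.sqrt 3 := by
  have hgcont : ∀ n : ℕ, Continuous (gfun n) := by
    intro n
    have : gfun n = fun t : ℝ => 3^(n+1)*(t^n*(1-t)^(n+1)) := rfl
    rw [this]; continuity
  have hterm_int : ∀ n : ℕ, IntegrableOn (gfun n) (Set.Ioc (0:ℝ) 1) volume :=
    fun n => (hgcont n).integrableOn_Ioc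
  have hnonneg : ∀ n : ℕ, 0 ≤ ∫ t in Set.Ioc (0:ℝ) 1, gfun n t := fun n =>
    setIntegral_nonneg measurableSet_Ioc (fun t ht => g_nonneg (Set.Ioc_subset_Icc_self ht))
  have hle : ∀ n : ℕ, ∫ t in Set.Ioc (0:ℝ) 1, gfun n t ≤ 3*(3/4)^n := by
    intro n
    calc ∫ t in Set.Ioc (0:ℝ) 1, gfun n t ≤ ∫ _ in Set.Ioc (0:ℝ) 1, 3*(3/4:ℝ)^n :=
          setIntegral_mono_on (hterm_int n) (integrableOn_const (by
            simp [Real.volume_Ioc])) measurableSet_Ioc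
            (fun t ht => g_le (Set.Ioc_subset_Icc_self ht))
      _ = 3*(3/4)^n := by simp [Real.volume_Ioc]
  have hsummable : Summable (fun n : ℕ => ∫ t in Set.Ioc (0:ℝ) 1, gfun n t) :=
    Summable.of_nonneg_of_le hnonneg hle
      ((summable_geometric_of_lt_one (by norm_num) (by norm_num)).mul_left 3)
  have heq : ∀ n : ℕ, ∫⁻ t in Set.Ioc (0:ℝ) 1, ‖gfun n t‖ₑ ∂volume
      = ENNReal.ofReal (∫ t in Set.Ioc (0:ℝ) 1, gfun n t) := by
    intro n
    have hnn : 0 ≤ᵐ[volume.restrict (Set.Ioc (0:ℝ) 1)] gfun n :=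
      (ae_restrict_iff' measurableSet_Ioc).2 (Filter.Eventually.of_forall
        (fun t ht => g_nonneg (Set.Ioc_subset_Icc_self ht)))
    rw [MeasureTheory.ofReal_integral_eq_lintegral_ofReal (hterm_int n) hnn]
    apply lintegral_congr_ae
    filter_upwards [hnn] with t ht
    exact Real.enorm_eq_ofReal ht
  have hswap : ∫ t in Set.Ioc (0:ℝ) 1, (∑' n, gfun n t)
      = ∑' n, ∫ t in Set.Ioc (0:ℝ) 1, gfun n t := by
    apply MeasureTheory.integral_tsum
    · exact fun n => ((hgcont n).aestronglyMeasurable).restrict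
    · simp_rw [heq]
      rw [← ENNReal.ofReal_tsum_of_nonneg hnonneg hsummable]
      exact ENNReal.ofReal_ne_top
  have hpt : ∫ t in Set.Ioc (0:ℝ) 1, (∑' n, gfun n t)
      = ∫ t in Set.Ioc (0:ℝ) 1, 3*(1-t)/(3*t^2-3*t+1) :=
    setIntegral_congr_fun measurableSet_Ioc
      (fun t ht => (hasSum_g (Set.Ioc_subset_Icc_self ht)).tsum_eq)
  have hfinal : ∫ t in Set.Ioc (0:ℝ) 1, 3*(1-t)/(3*t^2-3*t+1) = 2*π/Real.sqrt 3 := by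
    rw [← intervalIntegral.integral_of_le (by norm_num : (0:ℝ) ≤ 1)]
    exact integral_closed_form
  calc (∑' i : ℕ, (3:ℝ)^(i+1) / (((i:ℝ)+1) * ((Nat.choose (2*(i+1)) (i+1)) : ℝ)))
      = ∑' n, ∫ t in Set.Ioc (0:ℝ) 1, gfun n t := tsum_congr term_eq
    _ = ∫ t in Set.Ioc (0:ℝ) 1, (∑' n, gfun n t) := hswap.symm
    _ = 2 * Real.pi / Real.sqrt 3 := hpt.trans hfinal
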